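/- Let φ ∈ ℝᵖ and χ ∈ ℝ, and suppose A = XᵀX + χ²I_p is positive definite and φᵀ(XᵀX/χ² + I_p)⁻¹φ < ‖φ‖²/4 with χ ≠ 0. Then the (p+1)×(p+1) symmetric block matrix [[XᵀX + χ²I_p, 2χφ],[2χφᵀ, ‖φ‖²]] is positive definite. -/

import Mathlib

open Matrix

lemma unit_posDef (M : Matrix Unit Unit ℝ) (h : 0 < M () ()) : M.PosDef := by
  refine posDef_iff_dotProduct_mulVec.mpr ⟨?_, ?_⟩
  · ext i j
    rcases i; rcases j
    simp [conjTranspose_apply]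
  · intro x hx
    have hx0 : x () ≠ 0 := fun h0 => hx (funext fun i => by cases i; exact h0)
    have hval : star x ⬝ᵥ M *ᵥ x = M () () * (x () * x ()) := by
      simp [dotProduct, Matrix.mulVec, Fintype.sum_unique]
      ring
    rw [hval]
    exact mul_pos h (mul_self_pos.mpr hx0)

lemma posDef_fromBlocks₁₁ {m k : Type*} [Fintype m] [DecidableEq m] [Fintype k] [DecidableEq k]
    {A : Matrix m m ℝ} (B : Matrix m k ℝ) {D : Matrix k k ℝ} (hA : A.PosDef) [Invertible A]
    (hS : (D - Bᴴ * A⁻¹ * B).PosDef) : (fromBlocks A B Bᴴ D).PosDef := by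
  refine posDef_iff_dotProduct_mulVec.mpr ⟨(IsHermitian.fromBlocks₁₁ B D hA.1).mpr hS.1, fun x hx => ?_⟩
  rw [dotProduct_mulVec, ← Sum.elim_comp_inl_inr x, schur_complement_eq₁₁ B D _ _ hA.1]
  by_cases hy : x ∘ Sum.inr = 0
  · have hxl : x ∘ Sum.inl ≠ 0 := by
      intro h0
      apply hx
      funext i
      cases i with
      | inl a => exact congrFun h0 a
      | inr b => exact congrFun hy b
    have h1 : x ∘ Sum.inl + (A⁻¹ * B) *ᵥ (x ∘ Sum.inr) = x ∘ Sum.inl := by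
      rw [hy, mulVec_zero, add_zero]
    rw [h1, hy]
    have := hA.dotProduct_mulVec_pos hxl
    rw [dotProduct_mulVec] at this
    simpa using this
  · apply add_pos_of_nonneg_of_pos
    · rw [← dotProduct_mulVec]
      exact hA.posSemidef.dotProduct_mulVec_nonneg _
    · have := hS.dotProduct_mulVec_pos hy
      rw [dotProduct_mulVec] at this
      exact this

/-- The Hessian block matrix [[XᵀX + χ²I, 2χφ],[2χφᵀ, ‖φ‖²]] is positive definite
when χ ≠ 0 and φᵀ(XᵀX/χ² + I)⁻¹φ < ‖φ‖²/4. -/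
theorem hessian_block_posDef (n p : ℕ)
    (X : Matrix (Fin n) (Fin p) ℝ) (φ : Fin p → ℝ) (χ : ℝ) (hχ : χ ≠ 0)
    (hA : (Xᵀ * X + χ ^ 2 • (1 : Matrix (Fin p) (Fin p) ℝ)).PosDef)
    (hschur : φ ⬝ᵥ ((χ⁻¹ ^ 2 • (Xᵀ * X) + (1 : Matrix (Fin p) (Fin p) ℝ))⁻¹.mulVec φ)
        < (∑ j, (φ j) ^ 2) / 4)
    (M : Matrix (Fin p ⊕ Unit) (Fin p ⊕ Unit) ℝ)
    (hM : M = Matrix.of fun i j =>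
      match i, j with
      | Sum.inl i, Sum.inl j => (Xᵀ * X + χ ^ 2 • (1 : Matrix (Fin p) (Fin p) ℝ)) i j
      | Sum.inl i, Sum.inr _ => 2 * χ * φ i
      | Sum.inr _, Sum.inl j => 2 * χ * φ j
      | Sum.inr _, Sum.inr _ => ∑ j, (φ j) ^ 2) :
    M.PosDef := by
  set A : Matrix (Fin p) (Fin p) ℝ := Xᵀ * X + χ ^ 2 • (1 : Matrix (Fin p) (Fin p) ℝ) with hAdef
  set B : Matrix (Fin p) Unit ℝ := Matrix.of (fun i _ => 2 * χ * φ i) with hBdef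
  set D : Matrix Unit Unit ℝ := Matrix.of (fun _ _ => ∑ j, (φ j) ^ 2) with hDdef
  have hMeq : M = fromBlocks A B Bᴴ D := by
    rw [hM]
    ext i j
    cases i <;> cases j <;> simp [fromBlocks, conjTranspose_apply, hBdef, hDdef]
  haveI : Invertible A := hA.isUnit.invertible
  set C : Matrix (Fin p) (Fin p) ℝ := χ⁻¹ ^ 2 • (Xᵀ * X) + (1 : Matrix (Fin p) (Fin p) ℝ)
    with hCdef
  have hχ2 : χ ^ 2 * χ⁻¹ ^ 2 = 1 := by field_simp
  have hχ2' : χ⁻¹ ^ 2 * χ ^ 2 = 1 := by field_simp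
  have hAC : A = χ ^ 2 • C := by
    rw [hAdef, hCdef, smul_add, smul_smul, hχ2, one_smul, add_comm]
  have hCA : C = χ⁻¹ ^ 2 • A := by
    rw [hAC, smul_smul, hχ2', one_smul]
  have hCdet : IsUnit C.det := by
    rw [hCA, det_smul]
    exact (IsUnit.pow _ (isUnit_iff_ne_zero.mpr (by positivity))).mul
      hA.det_pos.ne'.isUnit
  have hAinv : A⁻¹ = χ⁻¹ ^ 2 • C⁻¹ := by
    apply inv_eq_right_inv
    rw [hAC, Matrix.smul_mul, Matrix.mul_smul, smul_smul, Matrix.mul_nonsing_inv C hCdet,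
      hχ2, one_smul]
  rw [hMeq]
  apply posDef_fromBlocks₁₁ B hA
  apply unit_posDef
  have hquad : (Bᴴ * A⁻¹ * B) () () = 4 * (φ ⬝ᵥ C⁻¹.mulVec φ) := by
    have : (Bᴴ * A⁻¹ * B) () () = ∑ j, (∑ i, (2 * χ * φ i) * A⁻¹ i j) * (2 * χ * φ j) := by
      simp [Matrix.mul_apply, hBdef, conjTranspose_apply]
    rw [this, hAinv]
    have hd : φ ⬝ᵥ C⁻¹.mulVec φ = ∑ j, (∑ i, φ i * C⁻¹ i j) * φ j := by
      simp [dotProduct, Matrix.mulVec, Finset.mul_sum, Finset.sum_mul]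
      rw [Finset.sum_comm]
      apply Finset.sum_congr rfl; intro j _
      apply Finset.sum_congr rfl; intro i _
      ring
    rw [hd, Finset.mul_sum]
    apply Finset.sum_congr rfl; intro j _
    simp only [Matrix.smul_apply, smul_eq_mul, Finset.sum_mul, Finset.mul_sum]
    apply Finset.sum_congr rfl; intro i _
    linear_combination (4 * φ i * C⁻¹ i j * φ j) * hχ2
  have hentry : (D - Bᴴ * A⁻¹ * B) () () = (∑ j, (φ j) ^ 2) - 4 * (φ ⬝ᵥ C⁻¹.mulVec φ) := by
    simp only [Matrix.sub_apply]
    rw [hquad]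
    simp [hDdef]
  rw [hentry]
  linarith
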